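/- A positive semidefinite n×n matrix X is (n−1)-incoherent if and only if there exist positive semidefinite matrices F_0,...,F_{n−1} with X = Σ_{i=0}^{n−1} F_i and ⟨i|F_i|i⟩ = 0 for every i. -/

import Mathlib

open Matrix BigOperators Finset ComplexOrder

/-- Circulant matrix: entries depend only on `(j - i) mod n`. -/
def IsCirc {n : ℕ} (G : Matrix (Fin n) (Fin n) ℂ) : Prop :=
  ∃ g : Fin n → ℂ, ∀ i j, G i j = g (j - i)

/-- The cyclic shift permutation matrix `P` with `P i j = 1` iff `j = i + 1 (mod n)`. -/
def cyclicShift (n : ℕ) [NeZero n] : Matrix (Fin n) (Fin n) ℂ :=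
  Matrix.of fun i j => if j = i + 1 then 1 else 0

/-- `k`-incoherent PSD matrix. -/
def KIncoherent {n : ℕ} (k : ℕ) (X : Matrix (Fin n) (Fin n) ℂ) : Prop :=
  ∃ (m : ℕ) (c : Fin m → ℝ) (ψ : Fin m → (Fin n → ℂ)),
    (∀ j, 0 ≤ c j) ∧
    (∀ j, (Finset.univ.filter fun i => ψ j i ≠ 0).card ≤ k) ∧
    X = ∑ j, (c j : ℂ) • Matrix.vecMulVec (ψ j) (star (ψ j))

/-- `(n-1)`-locally PSD: every principal submatrix obtained by deleting one row and the
corresponding column is positive semidefinite. -/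
def LocallyPSD {n : ℕ} (Y : Matrix (Fin n) (Fin n) ℂ) : Prop :=
  ∀ i : Fin n,
    Matrix.PosSemidef (Y.submatrix (fun k : {j : Fin n // j ≠ i} => (k : Fin n))
      (fun k : {j : Fin n // j ≠ i} => (k : Fin n)))

/-- The (unitary) discrete Fourier transform matrix. -/
noncomputable def dftMatrix (n : ℕ) : Matrix (Fin n) (Fin n) ℂ :=
  Matrix.of fun j k =>
    Complex.exp (2 * Real.pi * Complex.I * (j.val * k.val) / n) / Real.sqrt n

lemma psd_smul' {n : ℕ} {c : ℝ} (hc : 0 ≤ c) {M : Matrix (Fin n) (Fin n) ℂ}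
    (hM : M.PosSemidef) : ((c : ℂ) • M).PosSemidef := by
  constructor
  · unfold Matrix.IsHermitian
    rw [conjTranspose_smul, hM.1.eq]
    congr 1
    simp [Complex.star_def]
  · intro x
    have h := mul_nonneg (show (0:ℂ) ≤ c by exact_mod_cast hc) (hM.2 x)
    simp only [Finsupp.sum, Finset.mul_sum] at h
    simp only [Finsupp.sum, Matrix.smul_apply, smul_eq_mul]
    refine le_of_le_of_eq h (Finset.sum_congr rfl fun i _ => Finset.sum_congr rfl fun j _ => by ring)

lemma psd_vmv {n : ℕ} (ψ : Fin n → ℂ) : (Matrix.vecMulVec ψ (star ψ)).PosSemidef := by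
  rw [vecMulVec_eq Unit, ← conjTranspose_replicateCol]
  exact posSemidef_self_mul_conjTranspose _

lemma psd_fsum {n : ℕ} {ι : Type*} (s : Finset ι) (f : ι → Matrix (Fin n) (Fin n) ℂ)
    (h : ∀ j ∈ s, (f j).PosSemidef) : (∑ j ∈ s, f j).PosSemidef :=
  Finset.sum_induction f _ (fun _ _ ha hb => ha.add hb) .zero h

lemma herm_sum_rank_one {n : ℕ} {A : Matrix (Fin n) (Fin n) ℂ} (hA : A.IsHermitian) :
    A = ∑ k, (hA.eigenvalues k : ℂ) •
      Matrix.vecMulVec (fun a => hA.eigenvectorBasis k a) (star fun a => hA.eigenvectorBasis k a) := by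
  conv_lhs => rw [hA.spectral_theorem, Unitary.conjStarAlgAut_apply]
  ext i j
  simp only [mul_apply, diagonal_apply, Matrix.sum_apply, Matrix.smul_apply, vecMulVec_apply,
    Matrix.star_apply, IsHermitian.eigenvectorUnitary_apply, Function.comp_apply,
    Pi.star_apply, smul_eq_mul, mul_ite, ite_mul, zero_mul, mul_zero,
    Finset.sum_ite_eq, Finset.sum_ite_eq', Finset.mem_univ, if_true, Finset.sum_mul]
  refine Finset.sum_congr rfl fun k _ => ?_
  rw [mul_right_comm, mul_comm]
  rfl

theorem stmt4 {n : ℕ} (X : Matrix (Fin n) (Fin n) ℂ) (hX : X.PosSemidef) :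
    KIncoherent (n - 1) X ↔
      ∃ F : Fin n → Matrix (Fin n) (Fin n) ℂ,
        (∀ i, (F i).PosSemidef) ∧ X = ∑ i, F i ∧ ∀ i, F i i i = 0 := by
  classical
  constructor
  · rintro ⟨m, c, ψ, hc, hsupp, hXeq⟩
    rcases Nat.eq_zero_or_pos n with hn | hn
    · subst hn
      refine ⟨fun _ => 0, fun i => i.elim0, ?_, fun i => i.elim0⟩
      ext i j; exact i.elim0
    · have hpick : ∀ j, ∃ i, ψ j i = 0 := by
        intro j
        by_contra h
        push_neg at h
        have heq : (Finset.univ.filter fun i => ψ j i ≠ 0) = Finset.univ :=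
          Finset.filter_true_of_mem (fun i _ => h i)
        have := hsupp j
        rw [heq, Finset.card_univ, Fintype.card_fin] at this
        omega
      choose pick hpick using hpick
      refine ⟨fun i => ∑ j ∈ Finset.univ.filter (fun j => pick j = i),
          (c j : ℂ) • Matrix.vecMulVec (ψ j) (star (ψ j)), ?_, ?_, ?_⟩
      · intro i
        exact psd_fsum _ _ fun j _ => psd_smul' (hc j) (psd_vmv (ψ j))
      · rw [hXeq]
        exact (Finset.sum_fiberwise _ _ _).symm
      · intro i
        simp only [Matrix.sum_apply, Matrix.smul_apply, vecMulVec_apply]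
        refine Finset.sum_eq_zero fun j hj => ?_
        have : pick j = i := (Finset.mem_filter.mp hj).2
        rw [← this, hpick j]
        simp
  · rintro ⟨F, hFpsd, hXsum, hFdiag⟩
    set lam : Fin n → Fin n → ℝ := fun i k => (hFpsd i).1.eigenvalues k with hlam
    set v : Fin n → Fin n → Fin n → ℂ :=
      fun i k a => (hFpsd i).1.eigenvectorBasis k a with hv
    set Ψ : Fin n → Fin n → Fin n → ℂ :=
      fun i k => if lam i k = 0 then 0 else v i k with hΨ
    -- each rank-one term equals the spectral one
    have hterm : ∀ i k, (lam i k : ℂ) • Matrix.vecMulVec (Ψ i k) (star (Ψ i k))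
        = (lam i k : ℂ) • Matrix.vecMulVec (v i k) (star (v i k)) := by
      intro i k
      by_cases h0 : lam i k = 0
      · simp [h0]
      · simp [hΨ, h0]
    have hFdecomp : ∀ i, F i = ∑ k, (lam i k : ℂ) • Matrix.vecMulVec (Ψ i k) (star (Ψ i k)) := by
      intro i
      rw [Finset.sum_congr rfl fun k _ => hterm i k]
      exact herm_sum_rank_one (hFpsd i).1
    -- vanishing at i
    have hvzero : ∀ i k, Ψ i k i = 0 := by
      intro i k
      by_cases h0 : lam i k = 0
      · simp [hΨ, h0]
      · have hdiag := hFdiag i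
        rw [hFdecomp i] at hdiag
        simp only [Matrix.sum_apply, Matrix.smul_apply, vecMulVec_apply, Pi.star_apply,
          smul_eq_mul] at hdiag
        have hre : ∀ k, (lam i k : ℂ) * (Ψ i k i * star (Ψ i k i))
            = ((lam i k * Complex.normSq (Ψ i k i) : ℝ) : ℂ) := by
          intro k
          rw [Complex.star_def, Complex.mul_conj' (Ψ i k i)]
          push_cast [Complex.normSq_eq_norm_sq]
          ring
        rw [Finset.sum_congr rfl fun k _ => hre k] at hdiag
        rw [← Complex.ofReal_sum] at hdiag
        have hsum0 : ∑ k, lam i k * Complex.normSq (Ψ i k i) = 0 := by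
          exact_mod_cast hdiag
        have hnn : ∀ k ∈ Finset.univ, 0 ≤ lam i k * Complex.normSq (Ψ i k i) := by
          intro k _
          exact mul_nonneg ((hFpsd i).eigenvalues_nonneg k) (Complex.normSq_nonneg _)
        have := (Finset.sum_eq_zero_iff_of_nonneg hnn).mp hsum0 k (Finset.mem_univ k)
        rcases mul_eq_zero.mp this with h | h
        · exact absurd h h0
        · exact Complex.normSq_eq_zero.mp h
    refine ⟨n * n, fun j => lam (finProdFinEquiv.symm j).1 (finProdFinEquiv.symm j).2,
      fun j => Ψ (finProdFinEquiv.symm j).1 (finProdFinEquiv.symm j).2, ?_, ?_, ?_⟩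
    · intro j
      exact (hFpsd _).eigenvalues_nonneg _
    · intro j
      set i := (finProdFinEquiv.symm j).1
      set k := (finProdFinEquiv.symm j).2
      have hsub : (Finset.univ.filter fun a => Ψ i k a ≠ 0) ⊆ Finset.univ.erase i := by
        intro a ha
        rw [Finset.mem_erase]
        refine ⟨?_, Finset.mem_univ a⟩
        rintro rfl
        exact (Finset.mem_filter.mp ha).2 (hvzero i k)
      calc (Finset.univ.filter fun a => Ψ i k a ≠ 0).card
          ≤ (Finset.univ.erase i).card := Finset.card_le_card hsub
        _ = n - 1 := by rw [Finset.card_erase_of_mem (Finset.mem_univ i), Finset.card_univ,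
            Fintype.card_fin]
    · rw [hXsum]
      rw [← Equiv.sum_comp finProdFinEquiv
        (fun j => ((lam (finProdFinEquiv.symm j).1 (finProdFinEquiv.symm j).2 : ℂ) •
          Matrix.vecMulVec (Ψ (finProdFinEquiv.symm j).1 (finProdFinEquiv.symm j).2)
            (star (Ψ (finProdFinEquiv.symm j).1 (finProdFinEquiv.symm j).2))))]
      simp only [Equiv.symm_apply_apply]
      rw [Fintype.sum_prod_type]
      exact Finset.sum_congr rfl fun i _ => hFdecomp i
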